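/- arXiv:1502.00410 — 3 statements merged into one kernel-verified Lean document; each statement's English description precedes it below -/
import Mathlib

section
/- Let n > 2 be an integer with prime factorization n = p₁^{r₁} ⋯ p_t^{r_t}. Define b_{n,k} = gcd{C(n,1), C(n,2), …, C(n,k)} for 1 ≤ k ≤ n, and a_{n,k} = b_{n,k-1} / b_{n,k} for k ≥ 2. Then a_{n,k} = p_i if k is a power of p_i with k ≤ p_i^{r_i} for some i, and a_{n,k} = 1 otherwise. -/
open Finset

lemma mod_sub_of_dvd' {q a b : ℕ} (h : q ∣ a) (hb0 : 0 < b) (hbq : b < q)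
    (hba : b ≤ a) : (a - b) % q = q - b := by
  obtain ⟨c, rfl⟩ := h
  have hc : 1 ≤ c := by
    rcases Nat.eq_zero_or_pos c with rfl | hc
    · omega
    · exact hc
  have h1 : q * c - b = q * (c - 1) + (q - b) := by
    have h2 : q * c = q * (c - 1) + q := by
      rw [← Nat.mul_succ]; congr 1; omega
    omega
  rw [h1, Nat.mul_add_mod, Nat.mod_eq_of_lt (by omega)]

lemma choose_pow_factorization {p n j : ℕ} (hp : p.Prime) (hn : n ≠ 0)
    (hj : j ≤ n.factorization p) :
    (n.choose (p ^ j)).factorization p = n.factorization p - j := by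
  set r := n.factorization p with hr
  have hpdvd : p ^ r ∣ n := Nat.ordProj_dvd n p
  have hprn : p ^ r ≤ n := Nat.le_of_dvd (Nat.pos_of_ne_zero hn) hpdvd
  have hrlog : r ≤ Nat.log p n := (Nat.le_log_iff_pow_le hp.one_lt hn).mpr hprn
  have hjn : p ^ j ≤ n := le_trans (Nat.pow_le_pow_right hp.pos hj) hprn
  have key : ∀ i : ℕ, 1 ≤ i →
      (p ^ i ≤ p ^ j % p ^ i + (n - p ^ j) % p ^ i ↔ (j < i ∧ i ≤ r)) := by
    intro i _
    rcases le_or_gt i j with hij | hij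
    · -- i ≤ j : both mods are 0
      have h1 : p ^ j % p ^ i = 0 := Nat.mod_eq_zero_of_dvd (pow_dvd_pow p hij)
      have h2 : (n - p ^ j) % p ^ i = 0 := Nat.mod_eq_zero_of_dvd
        (Nat.dvd_sub (dvd_trans (pow_dvd_pow p (le_trans hij hj)) hpdvd) (pow_dvd_pow p hij))
      rw [h1, h2]
      have : 0 < p ^ i := pow_pos hp.pos i
      omega
    · -- j < i
      have hpj_lt : p ^ j < p ^ i := Nat.pow_lt_pow_right hp.one_lt hij
      have h1 : p ^ j % p ^ i = p ^ j := Nat.mod_eq_of_lt hpj_lt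
      rcases le_or_gt i r with hir | hir
      · -- j < i ≤ r : carry
        have h2 : (n - p ^ j) % p ^ i = p ^ i - p ^ j :=
          mod_sub_of_dvd' (dvd_trans (pow_dvd_pow p hir) hpdvd)
            (pow_pos hp.pos j) hpj_lt (le_trans hpj_lt.le (le_trans (Nat.pow_le_pow_right hp.pos hir) hprn))
        rw [h1, h2]
        constructor
        · intro _; exact ⟨hij, hir⟩
        · intro _; omega
      · -- i > r : no carry
        have hs0 : n % p ^ i ≠ 0 := by
          intro h
          have : p ^ i ∣ n := Nat.dvd_of_mod_eq_zero h
          have := (Nat.Prime.pow_dvd_iff_le_factorization hp hn).mp this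
          omega
        have hsj : p ^ j ∣ n % p ^ i :=
          (Nat.dvd_mod_iff (pow_dvd_pow p (le_of_lt hij))).mpr
            (dvd_trans (pow_dvd_pow p hj) hpdvd)
        have hsge : p ^ j ≤ n % p ^ i := Nat.le_of_dvd (Nat.pos_of_ne_zero hs0) hsj
        have hslt : n % p ^ i < p ^ i := Nat.mod_lt _ (pow_pos hp.pos i)
        have h2 : (n - p ^ j) % p ^ i = n % p ^ i - p ^ j := by
          have hdm : p ^ i * (n / p ^ i) + n % p ^ i = n := Nat.div_add_mod n (p ^ i)
          have h3 : n - p ^ j = p ^ i * (n / p ^ i) + (n % p ^ i - p ^ j) := by omega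
          rw [h3, Nat.mul_add_mod, Nat.mod_eq_of_lt (by omega)]
        rw [h1, h2]
        omega
  have hset : {i ∈ Ico 1 (Nat.log p n + 1) | p ^ i ≤ p ^ j % p ^ i + (n - p ^ j) % p ^ i}
      = Ico (j + 1) (r + 1) := by
    ext i
    simp only [mem_filter, mem_Ico]
    constructor
    · rintro ⟨⟨hi1, _⟩, hcond⟩
      have := (key i hi1).mp hcond
      omega
    · intro hi
      have h1 : 1 ≤ i := by omega
      exact ⟨⟨h1, by omega⟩, (key i h1).mpr (by omega)⟩
  have hK := hp.emultiplicity_choose (n := n) (k := p ^ j) (b := Nat.log p n + 1) hjn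
    (Nat.lt_succ_self _)
  rw [hset, Nat.card_Ico] at hK
  have hK' : emultiplicity p (n.choose (p ^ j)) = ((r - j : ℕ) : ℕ∞) := by
    rw [hK]; norm_cast; omega
  have hchoose : n.choose (p ^ j) ≠ 0 := Nat.choose_pos hjn |>.ne'
  have hdvd : p ^ (r - j) ∣ n.choose (p ^ j) :=
    pow_dvd_of_le_emultiplicity (le_of_eq hK'.symm)
  have hndvd : ¬ p ^ (r - j + 1) ∣ n.choose (p ^ j) := by
    intro h
    have := le_emultiplicity_of_pow_dvd h
    rw [hK'] at this
    have : (r - j + 1 : ℕ) ≤ (r - j : ℕ) := by exact_mod_cast this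
    omega
  have h1 := (Nat.Prime.pow_dvd_iff_le_factorization hp hchoose).mp hdvd
  have h2 : ¬ (r - j + 1 ≤ (n.choose (p ^ j)).factorization p) := by
    intro h
    exact hndvd ((Nat.Prime.pow_dvd_iff_le_factorization hp hchoose).mpr h)
  omega

lemma fact_le_choose_add {p n i : ℕ} (hp : p.Prime) (hn : n ≠ 0) (hi : i ≠ 0) (hin : i ≤ n) :
    n.factorization p ≤ (n.choose i).factorization p + i.factorization p := by
  have key : n * ((n - 1).choose (i - 1)) = n.choose i * i := by
    have h := Nat.add_one_mul_choose_eq (n - 1) (i - 1)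
    have h1 : (n - 1) + 1 = n := by omega
    have h2 : (i - 1) + 1 = i := by omega
    rw [h1, h2] at h
    exact h
  have hc1 : (n - 1).choose (i - 1) ≠ 0 := (Nat.choose_pos (by omega)).ne'
  have hc2 : n.choose i ≠ 0 := (Nat.choose_pos hin).ne'
  have h := congrArg (fun m : ℕ => m.factorization p) key
  simp only [Nat.factorization_mul hn hc1, Nat.factorization_mul hc2 hi,
    Finsupp.coe_add, Pi.add_apply] at h
  omega

lemma gcd_choose_factorization {p n k : ℕ} (hp : p.Prime) (hn : n ≠ 0) (hk : 1 ≤ k)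
    (hkn : k ≤ n) :
    ((Finset.Icc 1 k).gcd (fun i => n.choose i)).factorization p
      = n.factorization p - min (n.factorization p) (Nat.log p k) := by
  set r := n.factorization p with hr
  set L := Nat.log p k with hL
  set m := min r L with hm
  set B := (Icc 1 k).gcd (fun i => n.choose i) with hBdef
  have hB_dvd_n : B ∣ n := by
    have := Finset.gcd_dvd (f := fun i => n.choose i) (mem_Icc.mpr ⟨le_refl 1, hk⟩)
    simpa [Nat.choose_one_right] using this
  have hB0 : B ≠ 0 := by
    intro h
    rw [h] at hB_dvd_n
    exact hn (Nat.eq_zero_of_zero_dvd hB_dvd_n)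
  have hpm_le : p ^ m ≤ k :=
    le_trans (Nat.pow_le_pow_right hp.pos (min_le_right _ _))
      (Nat.pow_log_le_self p (by omega))
  have hmem : p ^ m ∈ Icc 1 k := mem_Icc.mpr ⟨Nat.one_le_pow _ _ hp.pos, hpm_le⟩
  have hupper : B ∣ n.choose (p ^ m) := Finset.gcd_dvd hmem
  have hcne : n.choose (p ^ m) ≠ 0 := (Nat.choose_pos (le_trans hpm_le hkn)).ne'
  have hup : B.factorization p ≤ r - m := by
    have h := Finsupp.le_def.mp ((Nat.factorization_le_iff_dvd hB0 hcne).mpr hupper) p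
    rwa [choose_pow_factorization hp hn (min_le_left _ _)] at h
  have hlow : p ^ (r - m) ∣ B := by
    apply Finset.dvd_gcd
    intro i hi
    rw [mem_Icc] at hi
    have hi1 : i ≠ 0 := by omega
    have hine : i ≤ n := le_trans hi.2 hkn
    have h2 := fact_le_choose_add hp hn hi1 hine
    have hvi : i.factorization p ≤ L := by
      have hd : p ^ (i.factorization p) ∣ i := Nat.ordProj_dvd i p
      have hle : p ^ (i.factorization p) ≤ i := Nat.le_of_dvd (by omega) hd
      exact (Nat.le_log_iff_pow_le hp.one_lt (by omega)).mpr (le_trans hle hi.2)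
    have hcne' : n.choose i ≠ 0 := (Nat.choose_pos hine).ne'
    rw [Nat.Prime.pow_dvd_iff_le_factorization hp hcne']
    omega
  have hlow' : r - m ≤ B.factorization p :=
    (Nat.Prime.pow_dvd_iff_le_factorization hp hB0).mp hlow
  omega

lemma log_pred_of_ne_pow {q k : ℕ} (hq : 1 < q) (hk : 2 ≤ k) (h : ∀ s, k ≠ q ^ s) :
    Nat.log q (k - 1) = Nat.log q k := by
  refine le_antisymm (Nat.log_mono_right (by omega)) ?_
  set L := Nat.log q k with hL
  have h1 : q ^ L ≤ k := Nat.pow_log_le_self q (by omega)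
  have h2 : q ^ L ≠ k := fun he => h L he.symm
  exact (Nat.le_log_iff_pow_le hq (by omega)).mpr (by omega)

lemma log_pow_pred {q m : ℕ} (hq : 1 < q) (hm : 1 ≤ m) :
    Nat.log q (q ^ m - 1) = m - 1 := by
  have h1 : q ^ (m - 1) * q = q ^ m := by
    rw [← pow_succ]; congr 1; omega
  have h2 : 1 ≤ q ^ (m - 1) := Nat.one_le_pow _ _ (by omega)
  have h4 : q ^ (m - 1) * 2 ≤ q ^ (m - 1) * q := Nat.mul_le_mul_left _ hq
  have h5 : 1 ≤ q ^ m := Nat.one_le_pow _ _ (by omega)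
  apply Nat.log_eq_of_pow_le_of_lt_pow
  · omega
  · have h3 : m - 1 + 1 = m := by omega
    rw [h3]
    omega



/-- For `n > 2` with prime factorization, with
`b n k = gcd {C(n,1), …, C(n,k)}`, the ratio `a_{n,k} = b_{n,k-1}/b_{n,k}` equals `p`
if `k = p^m` is a power of a prime `p` dividing `n` with `m ≤ ord_p n`, and equals `1`
otherwise. -/
theorem stmt0 (n : ℕ) (hn : 2 < n) (k : ℕ) (hk : 2 ≤ k) (hkn : k ≤ n) :
    (∀ p m : ℕ, p.Prime → p ∣ n → 1 ≤ m → m ≤ n.factorization p → k = p ^ m →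
        (Finset.Icc 1 (k - 1)).gcd (fun i => n.choose i) /
          (Finset.Icc 1 k).gcd (fun i => n.choose i) = p) ∧
    ((¬ ∃ p m : ℕ, p.Prime ∧ p ∣ n ∧ 1 ≤ m ∧ m ≤ n.factorization p ∧ k = p ^ m) →
        (Finset.Icc 1 (k - 1)).gcd (fun i => n.choose i) /
          (Finset.Icc 1 k).gcd (fun i => n.choose i) = 1) := by
  have hn0 : n ≠ 0 := by omega
  have hk1n : k - 1 ≤ n := by omega
  have hk11 : 1 ≤ k - 1 := by omega
  have hgcd0 : ∀ j : ℕ, 1 ≤ j → ((Finset.Icc 1 j).gcd (fun i => n.choose i)) ≠ 0 := by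
    intro j hj h
    have hd := Finset.gcd_dvd (f := fun i => n.choose i) (Finset.mem_Icc.mpr ⟨le_refl 1, hj⟩)
    rw [h] at hd
    have := Nat.eq_zero_of_zero_dvd hd
    simp [Nat.choose_one_right] at this
    omega
  have hBk0 := hgcd0 k (by omega)
  have hB10 := hgcd0 (k - 1) hk11
  constructor
  · intro p m hp hpdvd hm1 hmr hkpm
    have heq : (Finset.Icc 1 (k - 1)).gcd (fun i => n.choose i)
        = p * (Finset.Icc 1 k).gcd (fun i => n.choose i) := by
      apply Nat.eq_of_factorization_eq hB10 (Nat.mul_ne_zero hp.pos.ne' hBk0)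
      intro q
      by_cases hq : q.Prime
      · rw [Nat.factorization_mul hp.pos.ne' hBk0, Finsupp.coe_add, Pi.add_apply,
          gcd_choose_factorization hq hn0 hk11 hk1n,
          gcd_choose_factorization hq hn0 (by omega) hkn]
        by_cases hqp : q = p
        · subst hqp
          have hlogk : Nat.log q k = m := by rw [hkpm, Nat.log_pow hq.one_lt]
          have hlogk1 : Nat.log q (k - 1) = m - 1 := by
            rw [hkpm]; exact log_pow_pred hq.one_lt hm1
          rw [hlogk, hlogk1, Nat.Prime.factorization_self hq]
          omega
        · have hfq : p.factorization q = 0 := by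
            rw [hp.factorization, Finsupp.single_apply,
              if_neg (fun h => hqp h.symm)]
          have hlog : Nat.log q (k - 1) = Nat.log q k := by
            apply log_pred_of_ne_pow hq.one_lt hk
            intro s hs
            have hs1 : s ≠ 0 := by rintro rfl; simp at hs; omega
            have hqk : q ∣ k := hs ▸ dvd_pow_self q hs1
            have hpk : q ∣ p ^ m := hkpm ▸ hqk
            have hq2 := Nat.Prime.dvd_of_dvd_pow hq hpk
            exact hqp ((Nat.prime_dvd_prime_iff_eq hq hp).mp hq2)
          rw [hfq, hlog]; omega
      · rw [Nat.factorization_eq_zero_of_not_prime _ hq,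
          Nat.factorization_eq_zero_of_not_prime _ hq]
    rw [heq, Nat.mul_div_cancel _ (Nat.pos_of_ne_zero hBk0)]
  · intro hne
    have heq : (Finset.Icc 1 (k - 1)).gcd (fun i => n.choose i)
        = (Finset.Icc 1 k).gcd (fun i => n.choose i) := by
      apply Nat.dvd_antisymm
      · apply Finset.dvd_gcd
        intro i hi
        rw [Finset.mem_Icc] at hi
        rcases eq_or_lt_of_le hi.2 with hik | hik
        · subst hik
          have hcne : n.choose i ≠ 0 := (Nat.choose_pos (by omega)).ne'
          rw [← Nat.factorization_le_iff_dvd hB10 hcne, Finsupp.le_def]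
          intro q
          by_cases hq : q.Prime
          · rw [gcd_choose_factorization hq hn0 hk11 hk1n]
            set r := n.factorization q with hr
            set v := i.factorization q with hv
            have hlem2 := fact_le_choose_add (i := i) hq hn0 (by omega) (by omega)
            by_cases hv0 : v = 0
            · omega
            · have hqv : q ^ v ∣ i := Nat.ordProj_dvd i q
              have hqvle : q ^ v ≤ i := Nat.le_of_dvd (by omega) hqv
              rcases le_or_gt v r with hvr | hvr
              · have hqn : q ∣ n := by
                  have h1 : q ^ 1 ∣ n :=
                    (Nat.Prime.pow_dvd_iff_le_factorization hq hn0).mpr (by omega)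
                  rwa [pow_one] at h1
                have hne' : i ≠ q ^ v := by
                  intro he
                  exact hne ⟨q, v, hq, hqn, by omega, hvr, he⟩
                have hlt : q ^ v ≤ i - 1 := by
                  rcases lt_or_eq_of_le hqvle with h | h
                  · omega
                  · exact absurd h.symm hne'
                have hlogge : v ≤ Nat.log q (i - 1) :=
                  (Nat.le_log_iff_pow_le hq.one_lt (by omega)).mpr hlt
                omega
              · have hqr1 : q ^ (r + 1) ≤ q ^ v := Nat.pow_le_pow_right hq.pos (by omega)
                have h2q : q ^ r * 2 ≤ q ^ r * q := Nat.mul_le_mul_left _ hq.one_lt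
                have hqq : q ^ r * q = q ^ (r + 1) := (pow_succ q r).symm
                have h1r : 1 ≤ q ^ r := Nat.one_le_pow _ _ hq.pos
                have hle : q ^ r ≤ i - 1 := by omega
                have hlogge : r ≤ Nat.log q (i - 1) :=
                  (Nat.le_log_iff_pow_le hq.one_lt (by omega)).mpr hle
                omega
          · rw [Nat.factorization_eq_zero_of_not_prime _ hq]
            exact Nat.zero_le _
        · exact Finset.gcd_dvd (Finset.mem_Icc.mpr ⟨hi.1, by omega⟩)
      · apply Finset.dvd_gcd
        intro i hi
        rw [Finset.mem_Icc] at hi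
        exact Finset.gcd_dvd (Finset.mem_Icc.mpr ⟨hi.1, by omega⟩)
    rw [heq, Nat.div_self (Nat.pos_of_ne_zero hBk0)]
end

section
/- Let p be a prime and r ≥ 1. For any 1 ≤ s ≤ r there exists a sequence of integers h₁, …, h_s such that C(p^r, p^s) - p^{r-s} = h₁·C(p^r, p^{s-1}) + h₂·C(p^r, p^{s-2}) + ⋯ + h_s·C(p^r, 1). -/
open Nat

lemma aux1 (p : ℕ) (hp : p.Prime) : ∀ t u : ℕ, t ≤ u →
    (p ^ u - 1).choose (p ^ t - 1) ≡ 1 [MOD p] := by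
  haveI : Fact p.Prime := ⟨hp⟩
  intro t
  induction t with
  | zero => intro u _; simp [Nat.ModEq.refl]
  | succ t ih =>
    intro u htu
    obtain ⟨u, rfl⟩ : ∃ v, u = v + 1 := ⟨u - 1, by omega⟩
    have key : ∀ v : ℕ, (p ^ (v+1) - 1) % p = p - 1 ∧ (p ^ (v+1) - 1) / p = p ^ v - 1 := by
      intro v
      have hpp := hp.pos
      have h2 : 1 ≤ p ^ v := Nat.one_le_pow _ _ hp.pos
      have heq : p ^ (v+1) - 1 = p * (p ^ v - 1) + (p - 1) := by
        rw [Nat.mul_sub, pow_succ', mul_one]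
        have h3 : p ≤ p * p ^ v := Nat.le_mul_of_pos_right _ h2
        have := hp.pos
        omega
      constructor
      · rw [heq, Nat.mul_add_mod]
        exact Nat.mod_eq_of_lt (by omega)
      · rw [heq, Nat.mul_add_div hp.pos, Nat.div_eq_of_lt (by omega), add_zero]
    have lucas := Choose.choose_modEq_choose_mod_mul_choose_div_nat
      (p := p) (n := p ^ (u+1) - 1) (k := p ^ (t+1) - 1)
    rw [(key u).1, (key u).2, (key t).1, (key t).2, Nat.choose_self, one_mul] at lucas
    exact lucas.trans (ih u (by omega))

-- C(p^r, p^t) = p^(r-t) * C(p^r - 1, p^t - 1)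
lemma aux2 (p r t : ℕ) (hp : p.Prime) (htr : t ≤ r) :
    (p ^ r).choose (p ^ t) = p ^ (r - t) * (p ^ r - 1).choose (p ^ t - 1) := by
  have h1 : 1 ≤ p ^ t := Nat.one_le_pow _ _ hp.pos
  have h2 : 1 ≤ p ^ r := Nat.one_le_pow _ _ hp.pos
  have key := Nat.add_one_mul_choose_eq (p ^ r - 1) (p ^ t - 1)
  try simp only [Nat.succ_eq_add_one] at key
  rw [Nat.sub_add_cancel h2, Nat.sub_add_cancel h1] at key
  -- key : p ^ r * (p^r - 1).choose (p^t - 1) = (p^r).choose (p^t) * p^t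
  have hpow : p ^ r = p ^ (r - t) * p ^ t := by rw [← pow_add]; congr 1; omega
  have : p ^ t * ((p ^ r).choose (p ^ t)) = p ^ t * (p ^ (r - t) * (p ^ r - 1).choose (p ^ t - 1)) := by
    rw [mul_comm (p^t) _, ← key, hpow]; ring
  exact Nat.eq_of_mul_eq_mul_left (by positivity) this

/-- For a prime `p`, `r ≥ 1` and `1 ≤ s ≤ r` there are integers
`h₁, …, h_s` with `C(p^r, p^s) - p^(r-s) = Σ_{i=1}^{s} h_i · C(p^r, p^(s-i))`. -/
theorem stmt2 (p r s : ℕ) (hp : p.Prime) (hr : 1 ≤ r) (hs : 1 ≤ s) (hsr : s ≤ r) :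
    ∃ h : ℕ → ℤ,
      ((p ^ r).choose (p ^ s) : ℤ) - (p : ℤ) ^ (r - s) =
        ∑ i ∈ Finset.Icc 1 s, h i * ((p ^ r).choose (p ^ (s - i)) : ℤ) := by

  have hppos := hp.pos
  -- the quotient C' := C(p^r-1, p^s-1)
  set C' : ℕ := (p ^ r - 1).choose (p ^ s - 1) with hC'def
  have hC : (p ^ r).choose (p ^ s) = p ^ (r - s) * C' := aux2 p r s hp hsr
  have hmod : C' ≡ 1 [MOD p] := aux1 p hp s r hsr
  obtain ⟨m, hm⟩ : ∃ m : ℤ, (C' : ℤ) - 1 = (p : ℤ) * m := by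
    obtain ⟨c, hc⟩ := (Nat.modEq_iff_dvd (n := p)).mp hmod
    exact ⟨-c, by push_cast at hc ⊢; linarith⟩
  -- difference is p^(r-s+1) * m
  have hdiff : ((p ^ r).choose (p ^ s) : ℤ) - (p : ℤ) ^ (r - s) = (p : ℤ) ^ (r - s + 1) * m := by
    rw [hC]; push_cast
    rw [pow_succ]
    calc (p:ℤ) ^ (r-s) * C' - (p:ℤ)^(r-s) = (p:ℤ)^(r-s) * ((C':ℤ) - 1) := by ring
    _ = (p:ℤ)^(r-s) * ((p:ℤ) * m) := by rw [hm]
    _ = (p:ℤ)^(r-s) * p * m := by ring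
  -- C1 := C(p^r, p^(s-1)) = p^(r-s+1) * C''
  set C'' : ℕ := (p ^ r - 1).choose (p ^ (s-1) - 1) with hC''def
  have hC1 : (p ^ r).choose (p ^ (s-1)) = p ^ (r - s + 1) * C'' := by
    have := aux2 p r (s-1) hp (by omega)
    rwa [show r - (s-1) = r - s + 1 by omega] at this
  have hmod'' : C'' ≡ 1 [MOD p] := aux1 p hp (s-1) r (by omega)
  have hndvd : ¬ p ∣ C'' := by
    intro hdvd
    have h1 : p ∣ 1 := (Nat.modEq_zero_iff_dvd).mp
      (hmod''.symm.trans (Nat.modEq_zero_iff_dvd.mpr hdvd))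
    have h2 := Nat.le_of_dvd one_pos h1
    have h3 := hp.two_le
    omega
  have hcop : IsCoprime ((C'' : ℤ)) ((p : ℤ) ^ (s - 1)) := by
    have hnc : Nat.Coprime C'' (p ^ (s-1)) :=
      Nat.Coprime.pow_right _ ((hp.coprime_iff_not_dvd.mpr hndvd).symm)
    rw [show ((p:ℤ) ^ (s-1)) = ((p ^ (s-1) : ℕ) : ℤ) by push_cast; ring]
    exact Nat.isCoprime_iff_coprime.mpr hnc
  obtain ⟨a, b, hab⟩ := hcop
  -- a * C1 + b * p^r = p^(r-s+1)
  have hbez : a * ((p ^ r).choose (p ^ (s-1)) : ℤ) + b * (p : ℤ) ^ r = (p : ℤ) ^ (r - s + 1) := by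
    have hpr : ((p : ℤ)) ^ r = (p:ℤ) ^ (r - s + 1) * (p:ℤ) ^ (s - 1) := by
      rw [← pow_add]; congr 1; omega
    rw [hC1, hpr]; push_cast
    calc a * ((p:ℤ)^(r-s+1) * C'') + b * ((p:ℤ)^(r-s+1) * (p:ℤ)^(s-1))
        = (p:ℤ)^(r-s+1) * (a * C'' + b * (p:ℤ)^(s-1)) := by ring
    _ = (p:ℤ)^(r-s+1) := by rw [hab, mul_one]
  refine ⟨fun i => (if i = 1 then m * a else 0) + (if i = s then m * b else 0), ?_⟩
  rw [hdiff]
  have hsum : ∑ i ∈ Finset.Icc 1 s,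
      ((if i = 1 then m * a else 0) + (if i = s then m * b else 0)) *
        ((p ^ r).choose (p ^ (s - i)) : ℤ)
      = m * a * ((p ^ r).choose (p ^ (s - 1)) : ℤ)
        + m * b * ((p ^ r).choose (p ^ (s - s)) : ℤ) := by
    simp only [add_mul, ite_mul, zero_mul, Finset.sum_add_distrib, Finset.sum_ite_eq',
      Finset.mem_Icc]
    rw [if_pos ⟨le_refl 1, hs⟩, if_pos ⟨hs, le_refl s⟩]
  rw [hsum]
  have : p ^ (s - s) = 1 := by simp
  rw [this, Nat.choose_one_right]
  push_cast
  calc (p:ℤ) ^ (r-s+1) * m = m * (a * ((p ^ r).choose (p ^ (s-1)) : ℤ) + b * (p:ℤ)^r) := by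
        rw [hbez]; ring
  _ = m * a * ((p ^ r).choose (p ^ (s-1)) : ℤ) + m * b * (p:ℤ)^r := by ring
end

section
/- Let p be a prime, r ≥ 1, and let b_{p^r, k} = gcd{C(p^r, 1), …, C(p^r, k)}. Then b_{p^r, k} = p^{r-t} whenever p^t ≤ k < p^{t+1} and t ≤ r; in particular the graded ring ℤ[ω]/(b_{p^r,k}·ω^k : 1 ≤ k ≤ p^r) equals ℤ[ω]/(p^r ω, p^{r-1} ω^p, p^{r-2} ω^{p²}, …, ω^{p^r}). -/
open Polynomial

lemma fact_choose (p n i : ℕ) (hp : p.Prime) (hi0 : i ≠ 0) (hin : i ≤ p ^ n) :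
    ((p ^ n).choose i).factorization p = n - i.factorization p := by
  have h1 := Nat.Prime.emultiplicity_choose_prime_pow hp hin hi0
  rw [Nat.multiplicity_eq_factorization hp hi0] at h1
  have hc : (p ^ n).choose i ≠ 0 := (Nat.choose_pos hin).ne'
  rw [← Nat.multiplicity_eq_factorization hp hc]
  have hfin := (Nat.finiteMultiplicity_iff.2 ⟨hp.ne_one, Nat.choose_pos hin⟩)
  rw [hfin.emultiplicity_eq_multiplicity] at h1
  exact_mod_cast h1

lemma gcd_eq_pow (p r t k : ℕ) (hp : p.Prime) (h1 : p ^ t ≤ k) (h2 : k < p ^ (t + 1))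
    (ht : t ≤ r) :
    (Finset.Icc 1 k).gcd (fun i => (p ^ r).choose i) = p ^ (r - t) := by
  have hp1 : 1 < p := hp.one_lt
  have hk1 : 1 ≤ k := le_trans (Nat.one_le_pow _ _ hp.pos) h1
  rcases eq_or_lt_of_le ht with rfl | htr
  · -- t = r : gcd divides choose (p^t) (p^t) = 1
    have hmem : p ^ t ∈ Finset.Icc 1 k := Finset.mem_Icc.2 ⟨Nat.one_le_pow _ _ hp.pos, h1⟩
    have h3 := Finset.gcd_dvd (f := fun i => (p ^ t).choose i) hmem
    simp only [Nat.choose_self, Nat.dvd_one] at h3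
    simpa using h3
  · -- t < r
    have htr' : t + 1 ≤ r := htr
    have hkpr : k < p ^ r := lt_of_lt_of_le h2 (Nat.pow_le_pow_right hp.pos htr')
    apply Nat.dvd_antisymm
    · -- gcd ∣ p^(r-t)
      have hmem1 : 1 ∈ Finset.Icc 1 k := Finset.mem_Icc.2 ⟨le_refl _, hk1⟩
      have hd1 : (Finset.Icc 1 k).gcd (fun i => (p ^ r).choose i) ∣ p ^ r := by
        have h4 := Finset.gcd_dvd (f := fun i => (p ^ r).choose i) hmem1
        simpa [Nat.choose_one_right] using h4
      obtain ⟨s, hs, heq⟩ := (Nat.dvd_prime_pow hp).mp hd1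
      rw [heq]
      have hmemt : p ^ t ∈ Finset.Icc 1 k := Finset.mem_Icc.2 ⟨Nat.one_le_pow _ _ hp.pos, h1⟩
      have hdt : p ^ s ∣ (p ^ r).choose (p ^ t) := heq ▸ Finset.gcd_dvd hmemt
      have hptr : p ^ t ≤ p ^ r := Nat.pow_le_pow_right hp.pos ht
      have hcne : (p ^ r).choose (p ^ t) ≠ 0 := (Nat.choose_pos hptr).ne'
      have hle : s ≤ ((p ^ r).choose (p ^ t)).factorization p :=
        (Nat.Prime.pow_dvd_iff_le_factorization hp hcne).mp hdt
      rw [fact_choose p r (p ^ t) hp (pow_pos hp.pos t).ne' hptr] at hle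
      rw [Nat.Prime.factorization_pow hp] at hle
      simp at hle
      exact Nat.pow_dvd_pow p hle
    · -- p^(r-t) ∣ gcd
      apply Finset.dvd_gcd
      intro i hi
      rw [Finset.mem_Icc] at hi
      have hi0 : i ≠ 0 := by omega
      have hile : i ≤ p ^ r := le_of_lt (lt_of_le_of_lt hi.2 hkpr)
      have hcne : (p ^ r).choose i ≠ 0 := (Nat.choose_pos hile).ne'
      rw [Nat.Prime.pow_dvd_iff_le_factorization hp hcne, fact_choose p r i hp hi0 hile]
      have hft : i.factorization p ≤ t := by
        by_contra hcon
        push_neg at hcon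
        have : p ^ (t + 1) ∣ i := (Nat.Prime.pow_dvd_iff_le_factorization hp hi0).mpr hcon
        have := Nat.le_of_dvd (Nat.pos_of_ne_zero hi0) this
        omega
      omega

/-- let `b_{p^r,k} = gcd{C(p^r,1), …, C(p^r,k)}`.  Then
`b_{p^r,k} = p^{r-t}` whenever `p^t ≤ k < p^{t+1}` and `t ≤ r`; in particular the
ideal `(b_{p^r,k}·ω^k : 1 ≤ k ≤ p^r)` of `ℤ[ω]` equals the ideal
`(p^r ω, p^{r-1} ω^p, p^{r-2} ω^{p²}, …, ω^{p^r})`. -/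
theorem stmt16 (p r t k : ℕ) (hp : p.Prime) (hr : 1 ≤ r)
    (h1 : p ^ t ≤ k) (h2 : k < p ^ (t + 1)) (ht : t ≤ r) :
    (Finset.Icc 1 k).gcd (fun i => (p ^ r).choose i) = p ^ (r - t) ∧
    Ideal.span {f : Polynomial ℤ | ∃ k', 1 ≤ k' ∧ k' ≤ p ^ r ∧
        f = C (((Finset.Icc 1 k').gcd (fun i => (p ^ r).choose i) : ℕ) : ℤ) * X ^ k'} =
      Ideal.span {f : Polynomial ℤ | ∃ t', t' ≤ r ∧
        f = C ((p : ℤ) ^ (r - t')) * X ^ (p ^ t')} := by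
  constructor
  · exact gcd_eq_pow p r t k hp h1 h2 ht
  · apply le_antisymm
    · rw [Ideal.span_le]
      rintro f ⟨k', hk1, hk2, rfl⟩
      set t' := Nat.log p k' with ht'
      have hpt1 : p ^ t' ≤ k' := Nat.pow_log_le_self p (by omega)
      have hpt2 : k' < p ^ (t' + 1) := Nat.lt_pow_succ_log_self hp.one_lt k'
      have htr : t' ≤ r := by
        have : p ^ t' ≤ p ^ r := le_trans hpt1 hk2
        exact (Nat.pow_le_pow_iff_right hp.one_lt).mp this
      rw [gcd_eq_pow p r t' k' hp hpt1 hpt2 htr]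
      have hx : (X : Polynomial ℤ) ^ k' = X ^ (p ^ t') * X ^ (k' - p ^ t') := by
        rw [← pow_add]
        congr 1
        omega
      rw [hx, ← mul_assoc]
      push_cast
      exact Ideal.mul_mem_right _ _ (Ideal.subset_span ⟨t', htr, rfl⟩)
    · rw [Ideal.span_le]
      rintro f ⟨t', ht', rfl⟩
      apply Ideal.subset_span
      refine ⟨p ^ t', Nat.one_le_pow _ _ hp.pos, Nat.pow_le_pow_right hp.pos ht', ?_⟩
      rw [gcd_eq_pow p r t' (p ^ t') hp le_rfl
        (Nat.pow_lt_pow_right hp.one_lt (Nat.lt_succ_self _)) ht']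
      push_cast
      ring
end
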